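/- Let q be a prime power, let a_1, ..., a_n be distinct elements of F_q, let v_1, ..., v_n be nonzero elements of F_q, and assume 1 ≤ k ≤ ⌊n/2⌋. Then the generalized Reed–Solomon code GRS_k(a, v) is Euclidean self-orthogonal if and only if there exists a nonzero polynomial λ(x) ∈ F_q[x] of degree at most n − 2k such that v_i^2 = λ(a_i) · L_a(a_i)^{−1} and λ(a_i) ≠ 0 for every 1 ≤ i ≤ n. -/

import Mathlib

open Finset

variable {F : Type*} [Field F]

open Polynomial

lemma coeff_basis' {n : ℕ} (a : Fin n → F) (i : Fin n) :
    (Lagrange.basis univ a i).coeff (n - 1) =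
      (∏ j ∈ univ.erase i, (a i - a j))⁻¹ := by
  have hM : (∏ j ∈ univ.erase i, (X - C (a j))).Monic :=
    monic_prod_of_monic _ _ fun j _ => monic_X_sub_C _
  have hdeg : (∏ j ∈ univ.erase i, (X - C (a j))).natDegree = n - 1 := by
    rw [natDegree_prod_of_monic _ _ fun j _ => monic_X_sub_C _]
    simp [card_erase_of_mem]
  have hb : Lagrange.basis univ a i =
      C ((∏ j ∈ univ.erase i, (a i - a j))⁻¹) * ∏ j ∈ univ.erase i, (X - C (a j)) := by
    rw [Lagrange.basis, ← prod_inv_distrib, map_prod, ← prod_mul_distrib]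
    rfl
  rw [hb, coeff_C_mul, ← hdeg, hM.coeff_natDegree, mul_one]

lemma sum_eval_mul_inv {n : ℕ} (a : Fin n → F) (ha : Function.Injective a)
    (P : Polynomial F) (hP : P.degree < (n : ℕ)) :
    ∑ i, P.eval (a i) * (∏ j ∈ univ.erase i, (a i - a j))⁻¹ = P.coeff (n - 1) := by
  have hinj : Set.InjOn a (univ : Finset (Fin n)) := ha.injOn
  have hP' : P.degree < (#(univ : Finset (Fin n)) : ℕ) := by simpa using hP
  conv_rhs => rw [Lagrange.eq_interpolate hinj hP']
  rw [Lagrange.interpolate_apply, finset_sum_coeff]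
  exact Finset.sum_congr rfl fun i _ => by
    rw [coeff_C_mul, coeff_basis' a i]


/-- The generalized Reed–Solomon code
`GRS_k(a, v) = { (v₁ f(a₁), …, vₙ f(aₙ)) : f ∈ F[x], deg f ≤ k - 1 }`,
realized as the image of the space of polynomials of degree `< k` under the
evaluation-then-scale linear map. -/
noncomputable def GRSCode (n k : ℕ) (a v : Fin n → F) : Submodule F (Fin n → F) :=
  (Polynomial.degreeLT F k).map (LinearMap.pi fun i => v i • Polynomial.leval (a i))

/-- Lemma 2: criterion for Euclidean self-orthogonality of GRS codes.
Let `a 0, …, a (n-1)` be distinct elements of the finite field `F` and `v i` nonzero elements,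
and let `1 ≤ k ≤ ⌊n/2⌋`.  Then `GRS_k(a, v)` is Euclidean self-orthogonal iff there exists a
nonzero polynomial `λ` of degree at most `n - 2k` with
`v i ^ 2 = λ(a i) · L_a(a i)⁻¹ ≠ 0` for all `i`, where `L_a(a i) = ∏_{j ≠ i} (a i - a j)`. -/
theorem GRSCode_selfOrthogonal_iff (F : Type*) [Field F] [Fintype F]
    {n k : ℕ} (hk1 : 1 ≤ k) (hk2 : k ≤ n / 2)
    (a : Fin n → F) (ha : Function.Injective a)
    (v : Fin n → F) (hv : ∀ i, v i ≠ 0) :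
    (∀ b ∈ GRSCode n k a v, ∀ c ∈ GRSCode n k a v, ∑ i, b i * c i = 0) ↔
      ∃ lam : Polynomial F, lam ≠ 0 ∧ lam.degree ≤ (n - 2 * k : ℕ) ∧
        ∀ i, v i ^ 2 = lam.eval (a i) * (∏ j ∈ Finset.univ.erase i, (a i - a j))⁻¹ ∧
          lam.eval (a i) ≠ 0 := by
  have h2k : 2 * k ≤ n := by omega
  have hn2 : 2 ≤ n := by omega
  set L : Fin n → F := fun i => ∏ j ∈ univ.erase i, (a i - a j) with hLdef
  have hL : ∀ i, L i ≠ 0 := by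
    intro i
    refine Finset.prod_ne_zero_iff.2 fun j hj => sub_ne_zero.2 fun hEq => ?_
    exact (mem_erase.1 hj).1 (ha hEq.symm)
  -- membership characterization
  have hmem : ∀ p : Polynomial F, p.degree < (k : ℕ) →
      (fun i => v i * p.eval (a i)) ∈ GRSCode n k a v := by
    intro p hp
    refine ⟨p, Polynomial.mem_degreeLT.2 (by exact_mod_cast hp), ?_⟩
    funext i
    simp [LinearMap.pi_apply, smul_eq_mul]
  constructor
  · intro hso
    -- monomial sums vanish
    have hmono : ∀ s : ℕ, s ≤ 2 * k - 2 → ∑ i, v i ^ 2 * a i ^ s = 0 := by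
      intro s hs
      set r := min s (k - 1) with hr
      set t := s - r with ht
      have hrk : r < k := by omega
      have htk : t < k := by omega
      have hrt : r + t = s := by omega
      have hdr : (X ^ r : Polynomial F).degree < (k : ℕ) := by
        rw [degree_X_pow]; exact_mod_cast hrk
      have hdt : (X ^ t : Polynomial F).degree < (k : ℕ) := by
        rw [degree_X_pow]; exact_mod_cast htk
      have := hso _ (hmem _ hdr) _ (hmem _ hdt)
      rw [← this]
      refine Finset.sum_congr rfl fun i _ => ?_
      simp only [eval_pow, eval_X]
      rw [← hrt, pow_add]; ring
    set lam : Polynomial F := Lagrange.interpolate univ a (fun i => v i ^ 2 * L i) with hlam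
    have hdeglt : lam.degree < (n : ℕ) := by
      exact (Lagrange.degree_interpolate_lt _ (ha.injOn (s := (univ : Finset (Fin n))))).trans_eq (by simp)
    have heval : ∀ i, lam.eval (a i) = v i ^ 2 * L i := fun i =>
      Lagrange.eval_interpolate_at_node _ ha.injOn (mem_univ i)
    have hevalne : ∀ i, lam.eval (a i) ≠ 0 := fun i => by
      rw [heval i]; exact mul_ne_zero (pow_ne_zero _ (hv i)) (hL i)
    have hne : lam ≠ 0 := by
      intro h
      exact hevalne ⟨0, by omega⟩ (by rw [h, eval_zero])
    have hdeg : lam.degree ≤ ((n - 2 * k : ℕ) : WithBot ℕ) := by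
      by_contra hlt
      push_neg at hlt
      set d := lam.natDegree with hd
      have hd1 : n - 2 * k < d := by
        rwa [degree_eq_natDegree hne, Nat.cast_lt] at hlt
      have hd2 : d < n := (natDegree_lt_iff_degree_lt hne).2 hdeglt
      set s := n - 1 - d with hsdef
      have hsle : s ≤ 2 * k - 2 := by omega
      have hdegP : (X ^ s * lam).degree < ((n : ℕ) : WithBot ℕ) := by
        have : (X ^ s * lam) ≠ 0 := mul_ne_zero (pow_ne_zero _ X_ne_zero) hne
        rw [← natDegree_lt_iff_degree_lt this, natDegree_mul (pow_ne_zero _ X_ne_zero) hne,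
          natDegree_X_pow]
        omega
      have key := sum_eval_mul_inv a ha (X ^ s * lam) hdegP
      have hidx : n - 1 = d + s := by omega
      rw [hidx, coeff_X_pow_mul lam s d] at key
      have hzero : ∑ i, (X ^ s * lam).eval (a i) * (L i)⁻¹ = 0 := by
        rw [← hmono s hsle]
        refine Finset.sum_congr rfl fun i _ => ?_
        rw [eval_mul, eval_pow, eval_X, heval i, mul_assoc, mul_assoc,
          mul_inv_cancel₀ (hL i), mul_one]
        ring
      rw [hzero] at key
      exact hne (leadingCoeff_eq_zero.1 key.symm)
    refine ⟨lam, hne, hdeg, fun i => ⟨?_, hevalne i⟩⟩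
    rw [heval i, mul_assoc, mul_inv_cancel₀ (hL i), mul_one]
  · rintro ⟨lam, hne, hdeg, hval⟩ b hb c hc
    obtain ⟨p, hpmem, rfl⟩ := hb
    obtain ⟨q, hqmem, rfl⟩ := hc
    have hpd : p.degree < (k : WithBot ℕ) := Polynomial.mem_degreeLT.1 hpmem
    have hqd : q.degree < (k : WithBot ℕ) := Polynomial.mem_degreeLT.1 hqmem
    by_cases hp0 : p = 0
    · simp [hp0]
    by_cases hq0 : q = 0
    · simp [hq0]
    have hprodne : lam * (p * q) ≠ 0 := mul_ne_zero hne (mul_ne_zero hp0 hq0)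
    have hnatdeg : (lam * (p * q)).natDegree ≤ n - 2 := by
      rw [natDegree_mul hne (mul_ne_zero hp0 hq0), natDegree_mul hp0 hq0]
      have h1 : lam.natDegree ≤ n - 2 * k := natDegree_le_iff_degree_le.2 hdeg
      have h2 : p.natDegree < k := (natDegree_lt_iff_degree_lt hp0).2 hpd
      have h3 : q.natDegree < k := (natDegree_lt_iff_degree_lt hq0).2 hqd
      omega
    have hdeglt : (lam * (p * q)).degree < (n : ℕ) := by
      rw [← natDegree_lt_iff_degree_lt hprodne]; omega
    have key := sum_eval_mul_inv a ha (lam * (p * q)) hdeglt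
    have hcoeff : (lam * (p * q)).coeff (n - 1) = 0 := by
      apply coeff_eq_zero_of_natDegree_lt
      omega
    calc ∑ i, ((LinearMap.pi fun i => v i • Polynomial.leval (a i)) p) i *
          ((LinearMap.pi fun i => v i • Polynomial.leval (a i)) q) i
        = ∑ i, (lam * (p * q)).eval (a i) * (L i)⁻¹ := by
          refine Finset.sum_congr rfl fun i _ => ?_
          have h1 := (hval i).1
          simp only [LinearMap.pi_apply, LinearMap.smul_apply, leval_apply, smul_eq_mul]
          rw [eval_mul, eval_mul]
          calc v i * p.eval (a i) * (v i * q.eval (a i))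
              = v i ^ 2 * (p.eval (a i) * q.eval (a i)) := by ring
            _ = lam.eval (a i) * (L i)⁻¹ * (p.eval (a i) * q.eval (a i)) := by rw [h1]
            _ = lam.eval (a i) * (p.eval (a i) * q.eval (a i)) * (L i)⁻¹ := by ring
      _ = 0 := by rw [key, hcoeff]
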